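/- arXiv:1107.4073 — 2 statements merged into one kernel-verified Lean document; each statement's English description precedes it below -/
import Mathlib

section
/- For any binary word w of length n, all unmatched positions of the cyclic matching of w carry the same letter (all carry 0 or all carry 1). In particular: if w has strictly more 1's than 0's, then every position carrying a 0 is matched and the number of unmatched positions (all carrying 1) equals (number of 1's) − (number of 0's); if w has exactly as many 0's as 1's, then every position is matched; and if w has strictly more 0's than 1's, then every position carrying a 1 is matched and the number of unmatched positions (all carrying 0) equals (number of 0's) − (number of 1's). -/
/-!
Common definitions: binary words of length `n`, rotations, necklaces (the quotient
poset `Bₙ/Cₙ`), the cyclic matching procedure, Lyndon words, the map `φ`,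
crossing pairs, and the words `w_t`.

Throughout, a binary word of length `n` is a function `Fin n → Bool`, where `true`
encodes the letter `1` and `false` the letter `0`.
-/

/-- A binary word of length `n`: `true` encodes the letter `1`, `false` the letter `0`. -/
abbrev Word (n : ℕ) := Fin n → Bool

variable {n : ℕ} [NeZero n]

/-- The rotation `σ_i`, shifting the letters of `w` cyclically by `i` positions (so the
letter at position `j` of `w` appears at position `j + i` of `rot i w`). -/
def rot (i : Fin n) (w : Word n) : Word n := fun j => w (j - i)

lemma rot_rot (i j : Fin n) (w : Word n) : rot i (rot j w) = rot (j + i) w := by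
  funext k
  simp [rot, sub_sub, add_comm]

/-- Two words are equivalent when one is a cyclic rotation of the other. -/
def rotSetoid (n : ℕ) [NeZero n] : Setoid (Word n) where
  r w w' := ∃ i : Fin n, rot i w = w'
  iseqv := by
    refine ⟨fun w => ⟨0, ?_⟩, ?_, ?_⟩
    · funext j; simp [rot]
    · rintro w w' ⟨i, rfl⟩
      refine ⟨-i, ?_⟩
      rw [rot_rot]
      funext j; simp [rot]
    · rintro w w' w'' ⟨i, rfl⟩ ⟨j, rfl⟩
      exact ⟨i + j, (rot_rot j i w).symm⟩

/-- A necklace: an equivalence class of binary words under cyclic rotation. -/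
abbrev Necklace (n : ℕ) [NeZero n] := Quotient (rotSetoid n)

/-- The necklace of a word. -/
def nec (w : Word n) : Necklace n := Quotient.mk (rotSetoid n) w

/-- The number of `1`s in a word. -/
def wt (w : Word n) : ℕ := (Finset.univ.filter fun i => w i = true).card

/-- The number of `0`s in a word. -/
def zeros (w : Word n) : ℕ := (Finset.univ.filter fun i => w i = false).card

/-- The rank of a necklace: the number of `1`s in any representative. -/
noncomputable def rank (u : Necklace n) : ℕ := wt (Quotient.out u)

/-- The set of positions belonging to some pair of `M`. -/
def matchedPos (M : Finset (Fin n × Fin n)) : Finset (Fin n) :=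
  M.image Prod.fst ∪ M.image Prod.snd

/-- `j` is the first position outside `S` encountered strictly after `i` in the cyclic
order `i+1, i+2, …` (indices mod `n`). -/
def FirstAfter (S : Finset (Fin n)) (i j : Fin n) : Prop :=
  j ∉ S ∧ j ≠ i ∧ ∀ k : Fin n, k ∉ S → k ≠ i → (j - i).val ≤ (k - i).val

/-- One step of the cyclic matching procedure on the word `w`: choose an as-yet-unmatched
position `i` carrying the letter `0` such that the first as-yet-unmatched position `j`
after `i` in cyclic order carries the letter `1`, and declare `{i, j}` a matched pair
(recorded as the ordered pair `(i, j)`, the `0`-position first). -/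
inductive MatchStep (w : Word n) :
    Finset (Fin n × Fin n) → Finset (Fin n × Fin n) → Prop
  | step {M : Finset (Fin n × Fin n)} {i j : Fin n}
      (hi : i ∉ matchedPos M) (hw : w i = false)
      (hj : FirstAfter (matchedPos M) i j) (hj1 : w j = true) :
      MatchStep w M (insert (i, j) M)

/-- A maximal execution of the cyclic matching procedure on `w`, starting from the empty
matching: `M` is reachable from `∅` by matching steps and no further step is possible. -/
def IsMaximalMatching (w : Word n) (M : Finset (Fin n × Fin n)) : Prop :=
  Relation.ReflTransGen (MatchStep w) ∅ M ∧ ∀ M', ¬ MatchStep w M M'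

/-- The cyclic matching of `w`: the set of matched pairs produced by (any) maximal
execution of the cyclic matching procedure. -/
noncomputable def matching (w : Word n) : Finset (Fin n × Fin n) :=
  letI := Classical.dec (∃ M, IsMaximalMatching w M)
  if h : ∃ M, IsMaximalMatching w M then h.choose else ∅

/-- The unmatched positions of `w`: positions belonging to no matched pair. -/
noncomputable def unmatchedPos (w : Word n) : Finset (Fin n) :=
  Finset.univ \ matchedPos (matching w)

/-- Lexicographic comparison of words with respect to the letter order `1 ≺ 0`
(recall `true` encodes `1` and `false` encodes `0`). -/
def lexLE (w w' : Word n) : Prop :=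
  w = w' ∨ ∃ i : Fin n, (∀ j : Fin n, j < i → w j = w' j) ∧ w i = true ∧ w' i = false

/-- A word is Lyndon if it is lexicographically smallest among all of its rotations,
with respect to the letter order `1 ≺ 0`. -/
def IsLyndon (w : Word n) : Prop := ∀ i : Fin n, lexLE w (rot i w)

/-- The Lyndon rearrangement of `w`: its lexicographically smallest rotation. -/
noncomputable def lyndonOf (w : Word n) : Word n :=
  letI := Classical.dec (∃ i : Fin n, IsLyndon (rot i w))
  if h : ∃ i : Fin n, IsLyndon (rot i w) then rot h.choose w else w

/-- Change the letter at the rightmost unmatched position of `w` to `0`. -/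
noncomputable def flipTop (w : Word n) : Word n :=
  if h : (unmatchedPos w).Nonempty then
    Function.update w ((unmatchedPos w).max' h) false
  else w

/-- The map `φ`: take the Lyndon rearrangement of a representative and change the letter
at its rightmost unmatched position (which carries a `1` on the upper half of ranks)
to `0`. -/
noncomputable def phi (u : Necklace n) : Necklace n :=
  nec (flipTop (lyndonOf (Quotient.out u)))

/-- `x` lies strictly inside the cyclic arc running from `i` (exclusive) to `k`
(exclusive), in the cyclic order of positions. -/
def StrictBtw (i x k : Fin n) : Prop :=
  0 < (x - i).val ∧ (x - i).val < (k - i).val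

/-- The pairs `{i, k}` and `{j, l}` cross: exactly one of `j, l` lies strictly inside one
of the two cyclic arcs determined by `i` and `k`. -/
def Crosses (i k j l : Fin n) : Prop := Xor' (StrictBtw i j k) (StrictBtw i l k)

/-- `wT w t` is the word obtained from `w` by changing the letters at the last `t`
unmatched positions of `w` to `0`; that is, if the unmatched positions of `w` are
`p₁ < … < p_m`, the positions `p_{m-t+1}, …, p_m` are changed to `0`. -/
noncomputable def wT (w : Word n) (t : ℕ) : Word n := fun j =>
  if j ∈ unmatchedPos w ∧ ((unmatchedPos w).filter fun k => j ≤ k).card ≤ t then false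
  else w j

/-- The order on necklaces (the poset `Bₙ/Cₙ`): `u ≤ v` iff there are representatives
`w` of `u` and `w'` of `v` such that every position carrying `1` in `w` also carries `1`
in `w'`. -/
def nle (u v : Necklace n) : Prop :=
  ∃ w w' : Word n, nec w = u ∧ nec w' = v ∧ ∀ i, w i = true → w' i = true

/-- The strict order on necklaces. -/
def nlt (u v : Necklace n) : Prop := nle u v ∧ u ≠ v

/-- `v` covers `u` in `Bₙ/Cₙ`: `u < v` and there is no `z` with `u < z < v`. -/
def ncovBy (u v : Necklace n) : Prop := nlt u v ∧ ∀ z, nlt u z → ¬ nlt z v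

/-- A chain top: a necklace `v` in the upper half of ranks (`2·rank v ≥ n`) which is not
the image under `φ` of any necklace in the strict upper half of ranks. -/
def IsChainTop (v : Necklace n) : Prop :=
  n ≤ 2 * rank v ∧ ∀ u : Necklace n, n < 2 * rank u → phi u ≠ v

/-- The `φ`-string below the chain top `v`: the necklaces of the words `w_t`,
`0 ≤ t ≤ m`, where `w` is the Lyndon representative of `v` and `m = 2·rank v − n`. -/
noncomputable def chainOf (v : Necklace n) : Set (Necklace n) :=
  { u | ∃ t ≤ 2 * rank v - n, u = nec (wT (lyndonOf (Quotient.out v)) t) }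


section AuxProof

variable {n : ℕ} [NeZero n]

lemma fin_sub_val_of_le (u v : Fin n) (h : v.val ≤ u.val) : (u - v).val = u.val - v.val := by
  rw [Fin.sub_def]
  have hu := u.is_lt; have hv := v.is_lt
  show (n - v.val + u.val) % n = u.val - v.val
  rw [show n - v.val + u.val = n + (u.val - v.val) by omega, Nat.add_mod_left,
    Nat.mod_eq_of_lt (by omega)]

lemma fin_val_zero_iff {a : Fin n} : a.val = 0 ↔ a = 0 := by
  constructor
  · intro h
    exact Fin.ext (by simp [h])
  · rintro rfl; simp

lemma matchedPos_insert' (p : Fin n × Fin n) (M : Finset (Fin n × Fin n)) :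
    matchedPos (insert p M) = insert p.1 (insert p.2 (matchedPos M)) := by
  ext x
  simp only [matchedPos, Finset.mem_union, Finset.mem_image, Finset.mem_insert]
  constructor
  · rintro ((⟨q, hq, rfl⟩) | (⟨q, hq, rfl⟩)) <;> rcases hq with rfl | hq
    · exact Or.inl rfl
    · exact Or.inr (Or.inr (Or.inl ⟨q, hq, rfl⟩))
    · exact Or.inr (Or.inl rfl)
    · exact Or.inr (Or.inr (Or.inr ⟨q, hq, rfl⟩))
  · rintro (rfl | rfl | (⟨q, hq, rfl⟩) | (⟨q, hq, rfl⟩))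
    · exact Or.inl ⟨p, Or.inl rfl, rfl⟩
    · exact Or.inr ⟨p, Or.inl rfl, rfl⟩
    · exact Or.inl ⟨q, Or.inr hq, rfl⟩
    · exact Or.inr ⟨q, Or.inr hq, rfl⟩

lemma step_card {w : Word n} {M M' : Finset (Fin n × Fin n)} (h : MatchStep w M M') :
    (matchedPos M').card = (matchedPos M).card + 2 := by
  cases h with
  | @step i j hi hw hj hj1 =>
    rw [matchedPos_insert', Finset.card_insert_of_notMem, Finset.card_insert_of_notMem hj.1]
    simp only [Finset.mem_insert]
    push_neg
    exact ⟨fun h => hj.2.1 h.symm, hi⟩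

lemma inv_of_reachable {w : Word n} {M : Finset (Fin n × Fin n)}
    (h : Relation.ReflTransGen (MatchStep w) ∅ M) :
    (∀ p ∈ M, w p.1 = false ∧ w p.2 = true) ∧ (matchedPos M).card = 2 * M.card := by
  induction h with
  | refl => simp [matchedPos]
  | @tail b c hab hstep ih =>
    obtain ⟨hpairs, hcard⟩ := ih
    have hsc := step_card hstep
    cases hstep with
    | @step i j hi hw hj hj1 =>
      have hpm : (i, j) ∉ b := fun hmem =>
        hi (Finset.mem_union_left _ (Finset.mem_image_of_mem Prod.fst hmem))
      constructor
      · intro p hp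
        rcases Finset.mem_insert.mp hp with h | h
        · subst h; exact ⟨hw, hj1⟩
        · exact hpairs p h
      · rw [hsc, Finset.card_insert_of_notMem hpm, hcard]; ring
lemma exists_maximal (w : Word n) : ∃ M, IsMaximalMatching w M := by
  suffices H : ∀ k (M : Finset (Fin n × Fin n)),
      n ≤ (matchedPos M).card + k → Relation.ReflTransGen (MatchStep w) ∅ M →
      ∃ M', IsMaximalMatching w M' by
    refine H n ∅ ?_ Relation.ReflTransGen.refl
    omega
  intro k
  induction k with
  | zero =>
    intro M hcard hreach
    refine ⟨M, hreach, fun M' hstep => ?_⟩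
    have h1 : (matchedPos M').card ≤ n := by
      simpa using Finset.card_le_univ (matchedPos M')
    have h2 := step_card hstep
    omega
  | succ k ih =>
    intro M hcard hreach
    by_cases hstuck : ∀ M', ¬ MatchStep w M M'
    · exact ⟨M, hreach, hstuck⟩
    · push_neg at hstuck
      obtain ⟨M', hstep⟩ := hstuck
      have h2 := step_card hstep
      exact ih M' (by omega) (hreach.tail hstep)

lemma matching_isMax (w : Word n) : IsMaximalMatching w (matching w) := by
  have h := exists_maximal w
  rw [matching, dif_pos h]
  exact h.choose_spec

lemma mem_unmatched {w : Word n} {p : Fin n} :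
    p ∈ unmatchedPos w ↔ p ∉ matchedPos (matching w) := by
  simp [unmatchedPos]

lemma no_mixed (w : Word n) : ∀ d : ℕ, ∀ i j : Fin n, (j - i).val = d →
    i ∈ unmatchedPos w → j ∈ unmatchedPos w → w i = false → w j = true → False := by
  intro d
  induction d using Nat.strong_induction_on with
  | _ d ih =>
  intro i j hd hi hj h0 h1
  have hmax := (matching_isMax w).2
  have hi' : i ∉ matchedPos (matching w) := mem_unmatched.mp hi
  have hj' : j ∉ matchedPos (matching w) := mem_unmatched.mp hj
  have hji : j ≠ i := by rintro rfl; rw [h0] at h1; cases h1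
  have hjT : j ∈ Finset.univ.filter
      fun x : Fin n => x ∉ matchedPos (matching w) ∧ x ≠ i := by
    simp [hj', hji]
  obtain ⟨k, hkT, hkmin⟩ := Finset.exists_min_image _ (fun x => (x - i).val) ⟨j, hjT⟩
  simp only [Finset.mem_filter, Finset.mem_univ, true_and] at hkT
  obtain ⟨hk', hki⟩ := hkT
  have hFA : FirstAfter (matchedPos (matching w)) i k := by
    refine ⟨hk', hki, fun x hx1 hx2 => hkmin x ?_⟩
    simp [hx1, hx2]
  cases hwk : w k with
  | true => exact hmax _ (MatchStep.step hi' h0 hFA hwk)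
  | false =>
    have hkj : k ≠ j := by rintro rfl; rw [hwk] at h1; cases h1
    have hb1 : 1 ≤ (k - i).val := by
      rcases Nat.eq_zero_or_pos (k - i).val with h | h
      · exact absurd (sub_eq_zero.mp (fin_val_zero_iff.mp h)) hki
      · exact h
    have hb2 : (k - i).val ≤ d := hd ▸ hkmin j hjT
    have hd1 : 1 ≤ d := by
      rcases Nat.eq_zero_or_pos d with h | h
      · subst h
        exact absurd (sub_eq_zero.mp (fin_val_zero_iff.mp hd)) hji
      · exact h
    have hjk : j - k = (j - i) - (k - i) := (sub_sub_sub_cancel_right j k i).symm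
    have hval : (j - k).val = d - (k - i).val := by
      rw [hjk, fin_sub_val_of_le _ _ (by omega), hd]
    exact ih ((j - k).val) (by omega) k j rfl (mem_unmatched.mpr hk') hj hwk h1

lemma unmatched_dichotomy (w : Word n) :
    (∀ p ∈ unmatchedPos w, w p = true) ∨ (∀ p ∈ unmatchedPos w, w p = false) := by
  by_cases h : ∃ p ∈ unmatchedPos w, w p = false
  · obtain ⟨p, hp, hp0⟩ := h
    right
    intro q hq
    cases hwq : w q with
    | false => rfl
    | true => exact (no_mixed w _ p q rfl hp hq hp0 hwq).elim
  · push_neg at h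
    left
    intro p hp
    cases hwp : w p with
    | false => exact absurd hwp (h p hp)
    | true => rfl

end AuxProof

/-- All unmatched positions of the cyclic matching of `w` carry the same
letter.  If `w` has strictly more `1`s than `0`s, every position carrying a `0` is
matched, all unmatched positions carry a `1`, and their number is `#1s − #0s`; if `w` has
as many `0`s as `1`s, every position is matched; if `w` has strictly more `0`s than `1`s,
every position carrying a `1` is matched, all unmatched positions carry a `0`, and their
number is `#0s − #1s`. -/
theorem unmatched_same_letter_and_count (n : ℕ) [NeZero n] (w : Word n) :
    ((∀ p ∈ unmatchedPos w, w p = true) ∨ (∀ p ∈ unmatchedPos w, w p = false)) ∧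
    (zeros w < wt w →
      (∀ p : Fin n, w p = false → p ∈ matchedPos (matching w)) ∧
      (∀ p ∈ unmatchedPos w, w p = true) ∧
      (unmatchedPos w).card = wt w - zeros w) ∧
    (zeros w = wt w → unmatchedPos w = ∅) ∧
    (wt w < zeros w →
      (∀ p : Fin n, w p = true → p ∈ matchedPos (matching w)) ∧
      (∀ p ∈ unmatchedPos w, w p = false) ∧
      (unmatchedPos w).card = zeros w - wt w) := by
  have hreach := (matching_isMax w).1
  obtain ⟨hpairs, hcard⟩ := inv_of_reachable hreach
  have hinA : ∀ p ∈ (matching w).image Prod.fst, w p = false := by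
    intro p hp
    obtain ⟨q, hq, rfl⟩ := Finset.mem_image.mp hp
    exact (hpairs q hq).1
  have hinB : ∀ p ∈ (matching w).image Prod.snd, w p = true := by
    intro p hp
    obtain ⟨q, hq, rfl⟩ := Finset.mem_image.mp hp
    exact (hpairs q hq).2
  have hAle : ((matching w).image Prod.fst).card ≤ (matching w).card := Finset.card_image_le
  have hBle : ((matching w).image Prod.snd).card ≤ (matching w).card := Finset.card_image_le
  have hunion := Finset.card_union_add_card_inter
    ((matching w).image Prod.fst) ((matching w).image Prod.snd)
  have hMP : matchedPos (matching w) =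
      (matching w).image Prod.fst ∪ (matching w).image Prod.snd := rfl
  rw [hMP] at hcard
  have hAcard : ((matching w).image Prod.fst).card = (matching w).card := by omega
  have hBcard : ((matching w).image Prod.snd).card = (matching w).card := by omega
  -- zeros and ones split
  have hZeq : Finset.univ.filter (fun p => w p = false) =
      (matching w).image Prod.fst ∪ (unmatchedPos w).filter (fun p => w p = false) := by
    ext p
    simp only [Finset.mem_filter, Finset.mem_univ, true_and, Finset.mem_union]
    constructor
    · intro hp
      by_cases hpm : p ∈ matchedPos (matching w)
      · left
        rcases Finset.mem_union.mp (hMP ▸ hpm) with h | h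
        · exact h
        · rw [hinB p h] at hp; cases hp
      · exact Or.inr ⟨mem_unmatched.mpr hpm, hp⟩
    · rintro (h | ⟨-, h⟩)
      · exact hinA p h
      · exact h
  have hOeq : Finset.univ.filter (fun p => w p = true) =
      (matching w).image Prod.snd ∪ (unmatchedPos w).filter (fun p => w p = true) := by
    ext p
    simp only [Finset.mem_filter, Finset.mem_univ, true_and, Finset.mem_union]
    constructor
    · intro hp
      by_cases hpm : p ∈ matchedPos (matching w)
      · left
        rcases Finset.mem_union.mp (hMP ▸ hpm) with h | h
        · rw [hinA p h] at hp; cases hp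
        · exact h
      · exact Or.inr ⟨mem_unmatched.mpr hpm, hp⟩
    · rintro (h | ⟨-, h⟩)
      · exact hinB p h
      · exact h
  have hdisj0 : Disjoint ((matching w).image Prod.fst)
      ((unmatchedPos w).filter (fun p => w p = false)) := by
    rw [Finset.disjoint_left]
    intro p hp hp0
    exact (mem_unmatched.mp (Finset.mem_filter.mp hp0).1)
      (hMP ▸ Finset.mem_union_left _ hp)
  have hdisj1 : Disjoint ((matching w).image Prod.snd)
      ((unmatchedPos w).filter (fun p => w p = true)) := by
    rw [Finset.disjoint_left]
    intro p hp hp1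
    exact (mem_unmatched.mp (Finset.mem_filter.mp hp1).1)
      (hMP ▸ Finset.mem_union_right _ hp)
  have hz : zeros w = (matching w).card +
      ((unmatchedPos w).filter (fun p => w p = false)).card := by
    rw [zeros, hZeq, Finset.card_union_of_disjoint hdisj0, hAcard]
  have ho : wt w = (matching w).card +
      ((unmatchedPos w).filter (fun p => w p = true)).card := by
    rw [wt, hOeq, Finset.card_union_of_disjoint hdisj1, hBcard]
  have hUsplit : ((unmatchedPos w).filter (fun p => w p = true)).card +
      ((unmatchedPos w).filter (fun p => w p = false)).card = (unmatchedPos w).card := by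
    have h := Finset.card_filter_add_card_filter_not
      (s := unmatchedPos w) (p := fun p => w p = true)
    have h2 : (unmatchedPos w).filter (fun p => ¬ w p = true) =
        (unmatchedPos w).filter (fun p => w p = false) := by
      apply Finset.filter_congr
      intro p _
      cases hwp : w p <;> simp
    rw [h2] at h
    exact h
  refine ⟨unmatched_dichotomy w, ?_, ?_, ?_⟩
  · intro hlt
    rw [hz, ho] at hlt
    have h1 : ∀ p ∈ unmatchedPos w, w p = true := by
      rcases unmatched_dichotomy w with h | h
      · exact h
      · exfalso
        have hpos : 0 < ((unmatchedPos w).filter (fun p => w p = true)).card := by omega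
        obtain ⟨q, hq⟩ := Finset.card_pos.mp hpos
        obtain ⟨hq1, hq2⟩ := Finset.mem_filter.mp hq
        rw [h q hq1] at hq2; cases hq2
    have hU0 : ((unmatchedPos w).filter (fun p => w p = false)).card = 0 := by
      rw [Finset.card_eq_zero, Finset.filter_eq_empty_iff]
      intro p hp hpf
      rw [h1 p hp] at hpf; cases hpf
    refine ⟨?_, h1, ?_⟩
    · intro p hp0
      by_contra hpm
      rw [h1 p (mem_unmatched.mpr hpm)] at hp0; cases hp0
    · omega
  · intro heq
    rw [hz, ho] at heq
    rw [← Finset.card_eq_zero]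
    rcases unmatched_dichotomy w with h | h
    · have hU0 : ((unmatchedPos w).filter (fun p => w p = false)).card = 0 := by
        rw [Finset.card_eq_zero, Finset.filter_eq_empty_iff]
        intro p hp hpf
        rw [h p hp] at hpf; cases hpf
      omega
    · have hU1 : ((unmatchedPos w).filter (fun p => w p = true)).card = 0 := by
        rw [Finset.card_eq_zero, Finset.filter_eq_empty_iff]
        intro p hp hpf
        rw [h p hp] at hpf; cases hpf
      omega
  · intro hlt
    rw [hz, ho] at hlt
    have h1 : ∀ p ∈ unmatchedPos w, w p = false := by
      rcases unmatched_dichotomy w with h | h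
      · exfalso
        have hpos : 0 < ((unmatchedPos w).filter (fun p => w p = false)).card := by omega
        obtain ⟨q, hq⟩ := Finset.card_pos.mp hpos
        obtain ⟨hq1, hq2⟩ := Finset.mem_filter.mp hq
        rw [h q hq1] at hq2; cases hq2
      · exact h
    have hU1 : ((unmatchedPos w).filter (fun p => w p = true)).card = 0 := by
      rw [Finset.card_eq_zero, Finset.filter_eq_empty_iff]
      intro p hp hpf
      rw [h1 p hp] at hpf; cases hpf
    refine ⟨?_, h1, ?_⟩
    · intro p hp1
      by_contra hpm
      rw [h1 p (mem_unmatched.mpr hpm)] at hp1; cases hp1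
    · omega
end

section
/- Let w be a binary word of length n, let p ≠ q be unmatched positions of w both carrying the letter 1, and let {a, b} be a matched pair of w. Then the pair {p, q} does not cross the pair {a, b}. -/
variable {n : ℕ} [NeZero n]

lemma fin_sub_val' (x y : Fin n) :
    (x - y).val = if y.val ≤ x.val then x.val - y.val else x.val + n - y.val := by
  have hx := x.isLt
  have hy := y.isLt
  rw [Fin.sub_def]
  split_ifs with h
  · simp only
    rw [show n - y.val + x.val = (x.val - y.val) + n by omega, Nat.add_mod_right,
      Nat.mod_eq_of_lt (by omega)]
  · simp only
    rw [Nat.mod_eq_of_lt (by omega)]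
    omega

lemma not_crosses_of_arc (p q a b : Fin n) (hpa : p ≠ a) (hpb : p ≠ b)
    (hqa : q ≠ a) (hqb : q ≠ b)
    (h1 : ¬ StrictBtw a p b) (h2 : ¬ StrictBtw a q b) : ¬ Crosses p q a b := by
  have hx := p.isLt
  have hy := q.isLt
  have hz := a.isLt
  have hw := b.isLt
  have hpa' : p.val ≠ a.val := fun h => hpa (Fin.ext h)
  have hpb' : p.val ≠ b.val := fun h => hpb (Fin.ext h)
  have hqa' : q.val ≠ a.val := fun h => hqa (Fin.ext h)
  have hqb' : q.val ≠ b.val := fun h => hqb (Fin.ext h)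
  simp only [Crosses, StrictBtw, Xor', Xor, fin_sub_val'] at h1 h2 ⊢
  split_ifs at h1 h2 ⊢ <;> omega

lemma matchedPos_mono' {M : Finset (Fin n × Fin n)} (pr : Fin n × Fin n) :
    matchedPos M ⊆ matchedPos (insert pr M) :=
  Finset.union_subset_union
    (Finset.image_subset_image (Finset.subset_insert _ _))
    (Finset.image_subset_image (Finset.subset_insert _ _))

lemma reach_inv (w : Word n) {M : Finset (Fin n × Fin n)}
    (h : Relation.ReflTransGen (MatchStep w) ∅ M) :
    ∀ a b : Fin n, (a, b) ∈ M → ∀ x, StrictBtw a x b → x ∈ matchedPos M := by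
  induction h with
  | refl => simp
  | tail h1 h2 ih =>
    cases h2 with
    | @step i j hi hw hj hj1 =>
      intro a b hab x hx
      obtain ⟨hx1, hx2⟩ := hx
      rcases Finset.mem_insert.mp hab with heq | hmem
      · have ha : a = i := congrArg Prod.fst heq
        have hb : b = j := congrArg Prod.snd heq
        subst ha; subst hb
        have hxa : x ≠ a := by rintro rfl; simp [sub_self] at hx1
        by_contra hxM
        exact absurd (hj.2.2 x (fun hh => hxM (matchedPos_mono' _ hh)) hxa) (by omega)
      · exact matchedPos_mono' _ (ih a b hmem x ⟨hx1, hx2⟩)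

lemma matching_spec (w : Word n) :
    IsMaximalMatching w (matching w) ∨ matching w = ∅ := by
  unfold matching
  split
  · exact Or.inl (Exists.choose_spec ‹_›)
  · exact Or.inr rfl

/-- If `p ≠ q` are unmatched positions of `w` both carrying the letter
`1`, and `{a, b}` is a matched pair of `w`, then the pair `{p, q}` does not cross the
pair `{a, b}`. -/
theorem unmatched_pair_not_crossing_matched (n : ℕ) [NeZero n] (w : Word n)
    (p q : Fin n) (hp : p ∈ unmatchedPos w) (hq : q ∈ unmatchedPos w) (hpq : p ≠ q)
    (hp1 : w p = true) (hq1 : w q = true)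
    (ab : Fin n × Fin n) (hab : ab ∈ matching w) :
    ¬ Crosses p q ab.1 ab.2 := by
  rcases matching_spec w with hM | hE
  · obtain ⟨hreach, _⟩ := hM
    obtain ⟨a, b⟩ := ab
    have hpM : p ∉ matchedPos (matching w) := (Finset.mem_sdiff.mp hp).2
    have hqM : q ∉ matchedPos (matching w) := (Finset.mem_sdiff.mp hq).2
    have haM : a ∈ matchedPos (matching w) :=
      Finset.mem_union_left _ (Finset.mem_image.mpr ⟨(a, b), hab, rfl⟩)
    have hbM : b ∈ matchedPos (matching w) :=
      Finset.mem_union_right _ (Finset.mem_image.mpr ⟨(a, b), hab, rfl⟩)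
    apply not_crosses_of_arc
    · rintro rfl; exact hpM haM
    · rintro rfl; exact hpM hbM
    · rintro rfl; exact hqM haM
    · rintro rfl; exact hqM hbM
    · intro hS; exact hpM (reach_inv w hreach a b hab p hS)
    · intro hS; exact hqM (reach_inv w hreach a b hab q hS)
  · rw [hE] at hab; simp at hab
end
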